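/- Let α, β > 1 and r, s ≥ 0, and let a, b : ℝ × [1,∞) → ℂ be continuous with |a(k,t)| ≤ μ_{α,r}(k,t) and |b(k,t)| ≤ μ_{β,s}(k,t). Then there is a constant C (depending on α, β, r, s) such that for all k ∈ ℝ and t ≥ 1, |(a ∗ b)(k,t)| ≤ C ( t^{−r} μ_{β,s}(k,t) + t^{−s} μ_{α,r}(k,t) ), where (a∗b)(k,t) = (1/2π) ∫_ℝ a(k−k′,t) b(k′,t) dk′. -/

import Mathlib

open MeasureTheory

noncomputable def mu (α r k t : ℝ) : ℝ := 1 / (1 + (|k| * t ^ r) ^ α)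

noncomputable def conv (a b : ℝ → ℝ → ℂ) (k t : ℝ) : ℂ :=
  (1 / (2 * Real.pi) : ℝ) * ∫ k' : ℝ, a (k - k') t * b k' t

lemma mu_denom_pos (α r k t : ℝ) (ht : 1 ≤ t) : 0 < 1 + (|k| * t ^ r) ^ α := by
  have h1 : (0:ℝ) < t := lt_of_lt_of_le one_pos ht
  have h2 : (0:ℝ) ≤ |k| * t ^ r := mul_nonneg (abs_nonneg _) (Real.rpow_pos_of_pos h1 r).le
  have := Real.rpow_nonneg h2 α
  linarith

lemma mu_nonneg (α r k t : ℝ) (ht : 1 ≤ t) : 0 ≤ mu α r k t :=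
  le_of_lt (by unfold mu; exact div_pos one_pos (mu_denom_pos α r k t ht))

lemma mu_le_one (α r k t : ℝ) (ht : 1 ≤ t) : mu α r k t ≤ 1 := by
  unfold mu
  rw [div_le_one (mu_denom_pos α r k t ht)]
  have h1 : (0:ℝ) < t := lt_of_lt_of_le one_pos ht
  have h2 : (0:ℝ) ≤ |k| * t ^ r := mul_nonneg (abs_nonneg _) (Real.rpow_pos_of_pos h1 r).le
  have := Real.rpow_nonneg h2 α
  linarith

/-- If `|y| ≤ 2 * |x|` then `mu α r x t ≤ 2 ^ α * mu α r y t`. -/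
lemma mu_le_mu (α r t x y : ℝ) (hα : 1 ≤ α) (ht : 1 ≤ t) (hxy : |y| ≤ 2 * |x|) :
    mu α r x t ≤ 2 ^ α * mu α r y t := by
  have ht0 : (0:ℝ) < t := lt_of_lt_of_le one_pos ht
  have hc : (0:ℝ) < t ^ r := Real.rpow_pos_of_pos ht0 r
  have hα0 : (0:ℝ) ≤ α := le_trans zero_le_one hα
  have hDx := mu_denom_pos α r x t ht
  have hDy := mu_denom_pos α r y t ht
  have h2α : (1:ℝ) ≤ 2 ^ α := Real.one_le_rpow (by norm_num) hα0
  have hkey : (|y| * t ^ r) ^ α ≤ 2 ^ α * (|x| * t ^ r) ^ α := by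
    have h1 : |y| * t ^ r ≤ 2 * (|x| * t ^ r) := by
      nlinarith [mul_le_mul_of_nonneg_right hxy hc.le]
    calc (|y| * t ^ r) ^ α ≤ (2 * (|x| * t ^ r)) ^ α :=
          Real.rpow_le_rpow (mul_nonneg (abs_nonneg _) hc.le) h1 hα0
      _ = 2 ^ α * (|x| * t ^ r) ^ α :=
          Real.mul_rpow (by norm_num) (mul_nonneg (abs_nonneg _) hc.le)
  unfold mu
  rw [mul_one_div, div_le_div_iff₀ hDx hDy]
  have hx : (0:ℝ) ≤ (|x| * t ^ r) ^ α :=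
    Real.rpow_nonneg (mul_nonneg (abs_nonneg _) hc.le) α
  nlinarith [hkey, h2α, hx]

/-- Key pointwise bound. -/
lemma mu_key (α β r s t k k' : ℝ) (hα : 1 ≤ α) (hβ : 1 ≤ β) (ht : 1 ≤ t) :
    mu α r (k - k') t * mu β s k' t ≤
      (2 ^ α * mu α r k t) * mu β s k' t + (2 ^ β * mu β s k t) * mu α r (k - k') t := by
  have hμ1 := mu_nonneg α r (k - k') t ht
  have hμ2 := mu_nonneg β s k' t ht
  have hμ3 := mu_nonneg α r k t ht
  have hμ4 := mu_nonneg β s k t ht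
  have h2α : (0:ℝ) ≤ 2 ^ α := (Real.rpow_pos_of_pos two_pos α).le
  have h2β : (0:ℝ) ≤ 2 ^ β := (Real.rpow_pos_of_pos two_pos β).le
  by_cases h : |k| ≤ 2 * |k - k'|
  · have h1 : mu α r (k - k') t ≤ 2 ^ α * mu α r k t := mu_le_mu α r t (k - k') k hα ht h
    have := mul_le_mul_of_nonneg_right h1 hμ2
    nlinarith [mul_nonneg (mul_nonneg h2β hμ4) hμ1]
  · push_neg at h
    have habs : |k| ≤ |k - k'| + |k'| := by
      calc |k| = |(k - k') + k'| := by ring_nf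
        _ ≤ |k - k'| + |k'| := abs_add_le _ _
    have h' : |k| ≤ 2 * |k'| := by linarith
    have h1 : mu β s k' t ≤ 2 ^ β * mu β s k t := mu_le_mu β s t k' k hβ ht h'
    have := mul_le_mul_of_nonneg_left h1 hμ1
    nlinarith [mul_nonneg (mul_nonneg h2α hμ3) hμ2]

lemma continuous_base (β : ℝ) (hβ : 1 < β) :
    Continuous fun x : ℝ => 1 / (1 + |x| ^ β) := by
  have h1 : Continuous fun x : ℝ => 1 + |x| ^ β :=
    continuous_const.add (continuous_abs.rpow_const fun x => Or.inr (by linarith))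
  refine continuous_const.div h1 fun x => ?_
  have := Real.rpow_nonneg (abs_nonneg x) β
  linarith

lemma integrable_base (β : ℝ) (hβ : 1 < β) :
    Integrable (fun x : ℝ => 1 / (1 + |x| ^ β)) := by
  have hmaj : Integrable (fun x : ℝ => 2 ^ β * (1 + ‖x‖) ^ (-β)) :=
    (integrable_one_add_norm (by simpa using hβ)).const_mul _
  refine Integrable.mono' hmaj (continuous_base β hβ).aestronglyMeasurable
    (Filter.Eventually.of_forall fun x => ?_)
  have hd : (0:ℝ) < 1 + |x| ^ β := by
    have := Real.rpow_nonneg (abs_nonneg x) β; linarith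
  rw [Real.norm_eq_abs, abs_of_nonneg (by positivity)]
  have hxn : ‖x‖ = |x| := rfl
  have hb0 : (0:ℝ) ≤ β := by linarith
  have hkey : (1 + |x|) ^ β ≤ 2 ^ β * (1 + |x| ^ β) := by
    have hxb : (0:ℝ) ≤ |x| ^ β := Real.rpow_nonneg (abs_nonneg x) β
    have h2b : (0:ℝ) < 2 ^ β := Real.rpow_pos_of_pos two_pos β
    rcases le_total |x| 1 with hx1 | hx1
    · have : (1 + |x|) ^ β ≤ 2 ^ β :=
        Real.rpow_le_rpow (by positivity) (by linarith) hb0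
      nlinarith
    · have h1 : 1 + |x| ≤ 2 * |x| := by linarith
      have : (1 + |x|) ^ β ≤ (2 * |x|) ^ β :=
        Real.rpow_le_rpow (by positivity) h1 hb0
      rw [Real.mul_rpow (by norm_num) (abs_nonneg x)] at this
      nlinarith
  have hp : (0:ℝ) < (1 + |x|) ^ β := Real.rpow_pos_of_pos (by positivity) β
  rw [hxn, Real.rpow_neg (by positivity), ← div_eq_mul_inv ((2:ℝ) ^ β),
    div_le_div_iff₀ hd hp]
  nlinarith

lemma scaled_eq (β c : ℝ) (hc : 0 < c) :
    (fun x : ℝ => 1 / (1 + (|x| * c) ^ β)) = fun x => 1 / (1 + |c * x| ^ β) := by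
  funext x
  rw [abs_mul, abs_of_pos hc, mul_comm]

lemma integrable_scaled (β c : ℝ) (hβ : 1 < β) (hc : 0 < c) :
    Integrable (fun x : ℝ => 1 / (1 + (|x| * c) ^ β)) := by
  rw [scaled_eq β c hc]
  exact (integrable_base β hβ).comp_mul_left' hc.ne'

lemma integral_scaled (β c : ℝ) (hβ : 1 < β) (hc : 0 < c) :
    ∫ x : ℝ, 1 / (1 + (|x| * c) ^ β) = c⁻¹ * ∫ u : ℝ, 1 / (1 + |u| ^ β) := by
  rw [scaled_eq β c hc,
    MeasureTheory.Measure.integral_comp_mul_left (fun u : ℝ => 1 / (1 + |u| ^ β)) c,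
    smul_eq_mul, abs_of_pos (inv_pos.mpr hc)]

theorem convolution_bound (α β r s : ℝ) (hα : 1 < α) (hβ : 1 < β) (hr : 0 ≤ r) (hs : 0 ≤ s)
    (a b : ℝ → ℝ → ℂ)
    (ha_cont : ContinuousOn (fun p : ℝ × ℝ => a p.1 p.2) (Set.univ ×ˢ Set.Ici 1))
    (hb_cont : ContinuousOn (fun p : ℝ × ℝ => b p.1 p.2) (Set.univ ×ˢ Set.Ici 1))
    (ha : ∀ k t : ℝ, 1 ≤ t → ‖a k t‖ ≤ mu α r k t)
    (hb : ∀ k t : ℝ, 1 ≤ t → ‖b k t‖ ≤ mu β s k t) :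
    ∃ C : ℝ, ∀ k t : ℝ, 1 ≤ t →
      ‖conv a b k t‖
        ≤ C * (t ^ (-r) * mu β s k t + t ^ (-s) * mu α r k t) := by
  have hα1 : 1 ≤ α := hα.le
  have hβ1 : 1 ≤ β := hβ.le
  set Iα : ℝ := ∫ u : ℝ, 1 / (1 + |u| ^ α) with hIα_def
  set Iβ : ℝ := ∫ u : ℝ, 1 / (1 + |u| ^ β) with hIβ_def
  have hIα0 : 0 ≤ Iα := integral_nonneg fun u => by positivity
  have hIβ0 : 0 ≤ Iβ := integral_nonneg fun u => by positivity
  have h2α : (0:ℝ) ≤ 2 ^ α := (Real.rpow_pos_of_pos two_pos α).le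
  have h2β : (0:ℝ) ≤ 2 ^ β := (Real.rpow_pos_of_pos two_pos β).le
  refine ⟨(2 ^ α * Iβ + 2 ^ β * Iα) / (2 * Real.pi), fun k t ht => ?_⟩
  have ht0 : (0:ℝ) < t := lt_of_lt_of_le one_pos ht
  have hts : (0:ℝ) < t ^ s := Real.rpow_pos_of_pos ht0 s
  have htr : (0:ℝ) < t ^ r := Real.rpow_pos_of_pos ht0 r
  have hπ := Real.pi_pos
  -- continuity of the slices
  have hat : Continuous fun k' : ℝ => a (k - k') t := by
    rw [← continuousOn_univ]
    have hco : Continuous fun k' : ℝ => ((k - k', t) : ℝ × ℝ) := by continuity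
    exact ha_cont.comp hco.continuousOn fun k' _ => ⟨Set.mem_univ _, ht⟩
  have hbt : Continuous fun k' : ℝ => b k' t := by
    rw [← continuousOn_univ]
    have hco : Continuous fun k' : ℝ => ((k', t) : ℝ × ℝ) := by continuity
    exact hb_cont.comp hco.continuousOn fun k' _ => ⟨Set.mem_univ _, ht⟩
  set f : ℝ → ℂ := fun k' => a (k - k') t * b k' t with hf_def
  have hmeas : AEStronglyMeasurable f volume := (hat.mul hbt).aestronglyMeasurable
  -- pointwise bound on f
  have hfb : ∀ k', ‖f k'‖ ≤ mu α r (k - k') t * mu β s k' t := fun k' => by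
    rw [hf_def]
    simp only [norm_mul]
    exact mul_le_mul (by exact ha _ t ht)
      (by exact hb _ t ht) (norm_nonneg _) (mu_nonneg α r _ t ht)
  -- integrable majorants
  have hmuβ_eq : (fun k' : ℝ => mu β s k' t) = fun x => 1 / (1 + (|x| * t ^ s) ^ β) := rfl
  have hmuα_eq : (fun x : ℝ => mu α r x t) = fun x => 1 / (1 + (|x| * t ^ r) ^ α) := rfl
  have hIβ_int : Integrable (fun k' : ℝ => mu β s k' t) := by
    rw [hmuβ_eq]; exact integrable_scaled β _ hβ hts
  have hIα_int0 : Integrable (fun x : ℝ => mu α r x t) := by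
    rw [hmuα_eq]; exact integrable_scaled α _ hα htr
  have hIα_int : Integrable (fun k' : ℝ => mu α r (k - k') t) :=
    (integrable_comp_sub_left (μ := volume) (fun x => mu α r x t) k).mpr hIα_int0
  set g : ℝ → ℝ := fun k' =>
    (2 ^ α * mu α r k t) * mu β s k' t + (2 ^ β * mu β s k t) * mu α r (k - k') t with hg_def
  have hg_int : Integrable g := (hIβ_int.const_mul _).add (hIα_int.const_mul _)
  -- the basic norm estimates
  have h1 : ‖conv a b k t‖ = (1 / (2 * Real.pi)) * ‖∫ k' : ℝ, f k'‖ := by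
    unfold conv
    rw [norm_mul, Complex.norm_real, Real.norm_eq_abs,
      abs_of_pos (by positivity : (0:ℝ) < 1 / (2 * Real.pi))]
  have h2 : ‖∫ k' : ℝ, f k'‖ ≤ ∫ k', g k' := by
    refine le_trans (norm_integral_le_integral_norm f) ?_
    refine integral_mono_of_nonneg (Filter.Eventually.of_forall fun k' => norm_nonneg _)
      hg_int (Filter.Eventually.of_forall fun k' => ?_)
    exact le_trans (hfb k') (mu_key α β r s t k k' hα1 hβ1 ht)
  have h3 : ∫ k', g k' =
      (2 ^ α * mu α r k t) * ((t ^ s)⁻¹ * Iβ) + (2 ^ β * mu β s k t) * ((t ^ r)⁻¹ * Iα) := by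
    rw [hg_def, integral_add (hIβ_int.const_mul _) (hIα_int.const_mul _),
      integral_const_mul, integral_const_mul]
    congr 1
    · congr 1
      rw [show (∫ k' : ℝ, mu β s k' t) = ∫ x : ℝ, 1 / (1 + (|x| * t ^ s) ^ β) from rfl]
      exact integral_scaled β (t ^ s) hβ hts
    · congr 1
      rw [show (∫ k' : ℝ, mu α r (k - k') t)
            = ∫ k' : ℝ, (fun x => mu α r x t) (k - k') from rfl,
        integral_sub_left_eq_self (μ := volume) (fun x => mu α r x t) k]
      exact integral_scaled α (t ^ r) hα htr
  have hμα0 := mu_nonneg α r k t ht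
  have hμβ0 := mu_nonneg β s k t ht
  have hinner : (2 ^ α * mu α r k t) * ((t ^ s)⁻¹ * Iβ) + (2 ^ β * mu β s k t) * ((t ^ r)⁻¹ * Iα)
      ≤ (2 ^ α * Iβ + 2 ^ β * Iα) * ((t ^ r)⁻¹ * mu β s k t + (t ^ s)⁻¹ * mu α r k t) := by
    have hA : (0:ℝ) ≤ (t ^ s)⁻¹ * mu α r k t := by positivity
    have hB : (0:ℝ) ≤ (t ^ r)⁻¹ * mu β s k t := by positivity
    nlinarith [mul_nonneg (mul_nonneg h2α hIβ0) hB, mul_nonneg (mul_nonneg h2β hIα0) hA]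
  calc ‖conv a b k t‖ = (1 / (2 * Real.pi)) * ‖∫ k' : ℝ, f k'‖ := h1
    _ ≤ (1 / (2 * Real.pi)) * ∫ k', g k' := by
        exact mul_le_mul_of_nonneg_left h2 (by positivity)
    _ = (1 / (2 * Real.pi)) *
        ((2 ^ α * mu α r k t) * ((t ^ s)⁻¹ * Iβ) + (2 ^ β * mu β s k t) * ((t ^ r)⁻¹ * Iα)) := by
        rw [h3]
    _ ≤ (1 / (2 * Real.pi)) *
        ((2 ^ α * Iβ + 2 ^ β * Iα) * ((t ^ r)⁻¹ * mu β s k t + (t ^ s)⁻¹ * mu α r k t)) :=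
        mul_le_mul_of_nonneg_left hinner (by positivity)
    _ = (2 ^ α * Iβ + 2 ^ β * Iα) / (2 * Real.pi) *
        (t ^ (-r) * mu β s k t + t ^ (-s) * mu α r k t) := by
        rw [Real.rpow_neg ht0.le, Real.rpow_neg ht0.le]; ring
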